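/- Let λ, ε > 0 and z ∈ ℝ with (|z| + ε)² ≥ 4λ. Then every minimizer of the function x ↦ (1/2)(x - |z|)² + λ·log(1 + x/ε) over x ≥ 0 belongs to the set {0, z̃₁, z̃₂}, where z̃₁ = max{0, ((|z| - ε) + √((|z|+ε)² - 4λ))/2} and z̃₂ = max{0, ((|z| - ε) - √((|z|+ε)² - 4λ))/2}. -/

import Mathlib

/-- For λ, ε > 0, z ∈ ℝ with (|z| + ε)² ≥ 4λ, every minimizer of
F(x) = (1/2)(x - |z|)² + λ·log(1 + x/ε) over x ≥ 0 lies in {0, z̃₁, z̃₂}. -/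
theorem stmt_4 (lam eps z : ℝ) (hlam : 0 < lam) (heps : 0 < eps)
    (hcond : (|z| + eps) ^ 2 ≥ 4 * lam)
    (x : ℝ) (hx : 0 ≤ x)
    (hmin : ∀ y, 0 ≤ y →
      (1 / 2) * (x - |z|) ^ 2 + lam * Real.log (1 + x / eps) ≤
        (1 / 2) * (y - |z|) ^ 2 + lam * Real.log (1 + y / eps)) :
    x = 0 ∨
      x = max 0 (((|z| - eps) + Real.sqrt ((|z| + eps) ^ 2 - 4 * lam)) / 2) ∨
      x = max 0 (((|z| - eps) - Real.sqrt ((|z| + eps) ^ 2 - 4 * lam)) / 2) := by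
  by_cases hx0 : x = 0
  · exact Or.inl hx0
  have hxpos : 0 < x := lt_of_le_of_ne hx (Ne.symm hx0)
  set a := |z| with ha
  have hxe : (0:ℝ) < x + eps := by linarith
  have hpos : (0:ℝ) < 1 + x / eps := by positivity
  -- derivative
  have h1 : HasDerivAt (fun y : ℝ => (1/2) * (y - a) ^ 2) (x - a) x := by
    have := (((hasDerivAt_id x).sub_const a).pow 2).const_mul (1/2 : ℝ)
    convert this using 1
    · rfl
    · rfl
    · rfl
    · simp [id]
  have hinner : HasDerivAt (fun y : ℝ => 1 + y / eps) (1 / eps) x := by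
    simpa using ((hasDerivAt_id x).div_const eps).const_add (1:ℝ)
  have h2 : HasDerivAt (fun y : ℝ => lam * Real.log (1 + y / eps))
      (lam / (x + eps)) x := by
    have heq : lam * (1 / eps / (1 + x / eps)) = lam / (x + eps) := by
      rw [div_div]
      congr 1
      field_simp
      ring
    exact heq ▸ (hinner.log (ne_of_gt hpos)).const_mul lam
  have hderiv : HasDerivAt
      (fun y : ℝ => (1/2) * (y - a) ^ 2 + lam * Real.log (1 + y / eps))
      ((x - a) + lam / (x + eps)) x := h1.add h2
  have hloc : IsLocalMin
      (fun y : ℝ => (1/2) * (y - a) ^ 2 + lam * Real.log (1 + y / eps)) x := by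
    filter_upwards [Ioi_mem_nhds hxpos] with y hy
    exact hmin y (le_of_lt hy)
  have key : (x - a) + lam / (x + eps) = 0 := hloc.hasDerivAt_eq_zero hderiv
  have hq : (x - a) * (x + eps) + lam = 0 := by
    field_simp at key
    linarith [key]
  set s := Real.sqrt ((a + eps) ^ 2 - 4 * lam) with hsdef
  have hs : s ^ 2 = (a + eps) ^ 2 - 4 * lam := Real.sq_sqrt (by linarith)
  have hfact : (x - ((a - eps) + s) / 2) * (x - ((a - eps) - s) / 2) = 0 := by
    linear_combination hq - (1/4) * hs
  rcases mul_eq_zero.mp hfact with h | h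
  · right; left
    have hx' : x = ((a - eps) + s) / 2 := by linarith
    rw [max_eq_right (by linarith : (0:ℝ) ≤ ((a - eps) + s) / 2)]
    exact hx'
  · right; right
    have hx' : x = ((a - eps) - s) / 2 := by linarith
    rw [max_eq_right (by linarith : (0:ℝ) ≤ ((a - eps) - s) / 2)]
    exact hx'
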